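/- Let q be an odd prime with q ≡ 1 (mod 5) or q ≡ −1 (mod 5), and let k be an integer such that k² + k − 1 is not divisible by q. Then V_{q−1}(1 + 2k, k² + k − 1) ≡ (k² + k − 1)^{q−1} + 1 (mod q²). -/

import Mathlib

/-- The Lucas sequence of the second kind `V_n(P, Q)`:
`V_0 = 2`, `V_1 = P`, `V_i = P * V_{i-1} - Q * V_{i-2}`. -/
def lucasV (P Q : ℤ) : ℕ → ℤ
  | 0 => 2
  | 1 => P
  | n + 2 => P * lucasV P Q (n + 1) - Q * lucasV P Q n

/-- The Lucas sequence of the first kind. -/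
def lucasU (P Q : ℤ) : ℕ → ℤ
  | 0 => 0
  | 1 => 1
  | n + 2 => P * lucasU P Q (n + 1) - Q * lucasU P Q n

lemma lucas_sq (P Q : ℤ) : ∀ n : ℕ,
    lucasV P Q n ^ 2 - (P ^ 2 - 4 * Q) * lucasU P Q n ^ 2 = 4 * Q ^ n ∧
    lucasV P Q (n+1) ^ 2 - (P ^ 2 - 4 * Q) * lucasU P Q (n+1) ^ 2 = 4 * Q ^ (n+1) ∧
    lucasV P Q (n+1) * lucasV P Q n
      - (P ^ 2 - 4 * Q) * (lucasU P Q (n+1) * lucasU P Q n) = 2 * P * Q ^ n := by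
  intro n
  induction n with
  | zero => simp [lucasV, lucasU]; ring
  | succ n ih =>
    obtain ⟨h1, h2, h3⟩ := ih
    refine ⟨h2, ?_, ?_⟩
    · show (P * lucasV P Q (n+1) - Q * lucasV P Q n) ^ 2
        - (P ^ 2 - 4 * Q) * (P * lucasU P Q (n+1) - Q * lucasU P Q n) ^ 2 = 4 * Q ^ (n+2)
      linear_combination P ^ 2 * h2 + Q ^ 2 * h1 - 2 * P * Q * h3
    · show (P * lucasV P Q (n+1) - Q * lucasV P Q n) * lucasV P Q (n+1)
        - (P ^ 2 - 4 * Q) * ((P * lucasU P Q (n+1) - Q * lucasU P Q n) * lucasU P Q (n+1))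
        = 2 * P * Q ^ (n+1)
      linear_combination P * h2 - Q * h3

lemma lucas_cast (q : ℕ) (P Q : ℤ) (a b : ZMod q) (hab : a + b = (P : ZMod q))
    (hmul : a * b = (Q : ZMod q)) : ∀ n : ℕ,
    ((lucasV P Q n : ℤ) : ZMod q) = a ^ n + b ^ n ∧
    (a - b) * ((lucasU P Q n : ℤ) : ZMod q) = a ^ n - b ^ n := by
  intro n
  induction n using Nat.twoStepInduction with
  | zero => constructor <;> norm_num [lucasV, lucasU]
  | one => constructor <;> simp [lucasV, lucasU, ← hab]
  | more n ih1 ih2 =>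
    obtain ⟨hV1, hU1⟩ := ih1
    obtain ⟨hV2, hU2⟩ := ih2
    constructor
    · show ((P * lucasV P Q (n+1) - Q * lucasV P Q n : ℤ) : ZMod q) = _
      push_cast
      linear_combination (-((lucasV P Q (n+1) : ℤ) : ZMod q)) * hab
        + ((lucasV P Q n : ℤ) : ZMod q) * hmul + (a + b) * hV2 - a * b * hV1
    · show (a - b) * ((P * lucasU P Q (n+1) - Q * lucasU P Q n : ℤ) : ZMod q) = _
      push_cast
      linear_combination ((P : ZMod q)) * hU2 - ((Q : ZMod q)) * hU1
        - (a ^ (n+1) - b ^ (n+1)) * hab + (a ^ n - b ^ n) * hmul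

lemma isSquare_neg_one_zmod5 : IsSquare (-1 : ZMod 5) := by decide

theorem lucasV_fib_qsub1_congr (q : ℕ) (hq : q.Prime) (hodd : Odd q)
    (h5 : (q : ℤ) ≡ 1 [ZMOD 5] ∨ (q : ℤ) ≡ -1 [ZMOD 5]) (k : ℤ)
    (hk : ¬ (q : ℤ) ∣ (k ^ 2 + k - 1)) :
    lucasV (1 + 2 * k) (k ^ 2 + k - 1) (q - 1) ≡
      (k ^ 2 + k - 1) ^ (q - 1) + 1 [ZMOD (q : ℤ) ^ 2] := by
  haveI : Fact q.Prime := ⟨hq⟩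
  haveI : Fact (Nat.Prime 5) := ⟨by norm_num⟩
  set P : ℤ := 1 + 2 * k with hP
  set Q : ℤ := k ^ 2 + k - 1 with hQ
  set n : ℕ := q - 1 with hn
  have hq2 : q ≠ 2 := by
    rintro rfl; exact (Nat.not_odd_iff_even.mpr (by norm_num)) hodd
  have hq5 : q ≠ 5 := by
    rintro rfl
    rcases h5 with h | h <;> revert h <;> decide
  -- 5 is a square mod q
  have hq5cast : ((5 : ℤ) : ZMod q) ≠ 0 := by
    rw [Ne, ZMod.intCast_zmod_eq_zero_iff_dvd]
    intro h
    have : q ∣ 5 := by exact_mod_cast h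
    exact hq5 ((Nat.prime_dvd_prime_iff_eq hq (by norm_num)).mp this)
  have hsq5 : IsSquare (5 : ZMod q) := by
    have hrec : legendreSym q 5 = legendreSym 5 q :=
      legendreSym.quadratic_reciprocity_one_mod_four (by norm_num) hq2
    have hcast : ((q : ℤ) : ZMod 5) = 1 ∨ ((q : ℤ) : ZMod 5) = -1 := by
      rcases h5 with h | h
      · left
        have := (ZMod.intCast_eq_intCast_iff (q : ℤ) 1 5).mpr (by exact_mod_cast h)
        simpa using this
      · right
        have := (ZMod.intCast_eq_intCast_iff (q : ℤ) (-1) 5).mpr (by exact_mod_cast h)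
        simpa using this
    have hq0 : ((q : ℤ) : ZMod 5) ≠ 0 := by
      rcases hcast with h | h <;> rw [h]
      · exact one_ne_zero
      · exact neg_ne_zero.mpr one_ne_zero
    have hqsq : IsSquare (((q : ℤ)) : ZMod 5) := by
      rcases hcast with h | h <;> rw [h]
      · exact IsSquare.one
      · exact isSquare_neg_one_zmod5
    have h1 : legendreSym 5 q = 1 := (legendreSym.eq_one_iff 5 hq0).mpr hqsq
    have := (legendreSym.eq_one_iff q hq5cast).mp (by rw [hrec]; exact_mod_cast h1)
    exact_mod_cast this
  obtain ⟨s, hs⟩ := hsq5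
  have h2ne : (2 : ZMod q) ≠ 0 := by
    have : ((2 : ℕ) : ZMod q) ≠ 0 := by
      rw [Ne, ZMod.natCast_eq_zero_iff]
      intro h
      exact hq2 ((Nat.prime_dvd_prime_iff_eq hq (by norm_num)).mp h)
    exact_mod_cast this
  set a : ZMod q := ((P : ZMod q) + s) * 2⁻¹ with ha
  set b : ZMod q := ((P : ZMod q) - s) * 2⁻¹ with hb
  have hab : a + b = (P : ZMod q) := by
    rw [ha, hb]; field_simp; ring
  have hmul : a * b = (Q : ZMod q) := by
    rw [ha, hb]
    field_simp
    have hs' : (5 : ZMod q) = s * s := hs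
    have hPc : (P : ZMod q) = 1 + 2 * (k : ZMod q) := by rw [hP]; push_cast; ring
    have hQc : (Q : ZMod q) = (k : ZMod q) ^ 2 + (k : ZMod q) - 1 := by rw [hQ]; push_cast; ring
    rw [hPc, hQc]
    linear_combination hs'
  have hQ0 : ((Q : ℤ) : ZMod q) ≠ 0 := by
    rw [Ne, ZMod.intCast_zmod_eq_zero_iff_dvd]; exact hk
  have ha0 : a ≠ 0 := left_ne_zero_of_mul (hmul ▸ hQ0)
  have hb0 : b ≠ 0 := right_ne_zero_of_mul (hmul ▸ hQ0)
  have hsne : s ≠ 0 := by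
    intro h; apply hq5cast; rw [show ((5:ℤ) : ZMod q) = (5 : ZMod q) by push_cast; ring, hs, h, mul_zero]
  have habs : a - b = s := by rw [ha, hb]; field_simp; ring
  obtain ⟨hV, hU⟩ := lucas_cast q P Q a b hab hmul n
  have hFa : a ^ n = 1 := by rw [hn]; exact ZMod.pow_card_sub_one_eq_one ha0
  have hFb : b ^ n = 1 := by rw [hn]; exact ZMod.pow_card_sub_one_eq_one hb0
  -- divisibilities
  have hVd : (q : ℤ) ∣ lucasV P Q n - 2 := by
    rw [← ZMod.intCast_zmod_eq_zero_iff_dvd]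
    push_cast
    rw [hV, hFa, hFb]; ring
  have hUd : (q : ℤ) ∣ lucasU P Q n := by
    rw [← ZMod.intCast_zmod_eq_zero_iff_dvd]
    have : (a - b) * ((lucasU P Q n : ℤ) : ZMod q) = 0 := by
      rw [hU, hFa, hFb]; ring
    rw [habs] at this
    exact (mul_eq_zero.mp this).resolve_left hsne
  have key : ((q : ℤ)) ^ 2 ∣ 4 * (Q ^ n - lucasV P Q n + 1) := by
    have hid : 4 * (Q ^ n - lucasV P Q n + 1)
        = (lucasV P Q n - 2) ^ 2 - 5 * lucasU P Q n ^ 2 := by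
      have h := (lucas_sq P Q n).1
      have hD : P ^ 2 - 4 * Q = 5 := by rw [hP, hQ]; ring
      rw [hD] at h
      linear_combination -h
    rw [hid]
    exact dvd_sub (pow_dvd_pow_of_dvd hVd 2) ((pow_dvd_pow_of_dvd hUd 2).mul_left 5)
  have hcop : IsCoprime ((q : ℤ) ^ 2) 4 := by
    have h2 : IsCoprime (q : ℤ) 2 := by
      refine ((Int.prime_two.coprime_iff_not_dvd).mpr ?_).symm
      rw [← even_iff_two_dvd, Int.not_even_iff_odd]
      exact_mod_cast hodd
    have := h2.pow (m := 2) (n := 2)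
    norm_num at this
    exact this
  have final : ((q : ℤ)) ^ 2 ∣ Q ^ n - lucasV P Q n + 1 :=
    hcop.dvd_of_dvd_mul_left key
  refine Int.modEq_iff_dvd.mpr ?_
  convert final using 1
  ring
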